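/- Let P be an n × m matrix over 𝔽₂, z ∈ 𝔽₂ⁿ, y ∈ 𝔽₂^m with: (1) |y| ≡ 0 (mod 2); (2) |P_α ∧ y| ≡ 0 (mod 2) for all α; (3) |(z_α(P_β ∧ P_γ) ⊕ z_β(P_α ∧ P_γ) ⊕ z_γ(P_α ∧ P_β)) ∧ y| ≡ 0 (mod 2) for all α < β < γ. Then, with P' = P ⊕ z·yᵀ, for all α ≤ β ≤ γ we have |P'_α ∧ P'_β ∧ P'_γ| ≡ |P_α ∧ P_β ∧ P_γ| (mod 2). -/
import Mathlib

/-- Hamming weight of a Boolean vector. -/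
def wt {m : ℕ} (v : Fin m → Bool) : ℕ :=
  (Finset.univ.filter (fun i => v i = true)).card

private def b2 (x : Bool) : ZMod 2 := if x then 1 else 0

private lemma b2_and (x y : Bool) : b2 (x && y) = b2 x * b2 y := by
  cases x <;> cases y <;> decide

private lemma b2_xor (x y : Bool) : b2 (Bool.xor x y) = b2 x + b2 y := by
  cases x <;> cases y <;> decide

private lemma wt_cast {m : ℕ} (v : Fin m → Bool) :
    ((wt v : ℕ) : ZMod 2) = ∑ i, b2 (v i) := by
  rw [wt, Finset.card_filter, Nat.cast_sum]
  apply Finset.sum_congr rfl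
  intro i _
  by_cases h : v i = true <;> simp [h, b2]

private lemma wt_zero_iff {m : ℕ} (v : Fin m → Bool) (h : wt v % 2 = 0) :
    ∑ i, b2 (v i) = 0 := by
  rw [← wt_cast, ← ZMod.natCast_mod, h, Nat.cast_zero]

private lemma bool_key (a b c za zb zc u : Bool) :
    ((Bool.xor a (za && u)) && (Bool.xor b (zb && u)) && (Bool.xor c (zc && u))) =
    Bool.xor (a && b && c)
      (Bool.xor (Bool.xor (Bool.xor (Bool.xor
        ((Bool.xor (Bool.xor (za && (b && c)) (zb && (a && c))) (zc && (a && b))) && u)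
        ((za && zb) && (c && u)))
        ((za && zc) && (b && u)))
        ((zb && zc) && (a && u)))
        ((za && zb && zc) && u)) := by
  cases a <;> cases b <;> cases c <;> cases za <;> cases zb <;> cases zc <;> cases u <;> decide

theorem stmt_6 (n m : ℕ) (P : Fin n → Fin m → Bool)
    (z : Fin n → Bool) (y : Fin m → Bool)
    (h1 : wt y % 2 = 0)
    (h2 : ∀ α, wt (fun i => P α i && y i) % 2 = 0)
    (h3 : ∀ α β γ : Fin n, α < β → β < γ →
      wt (fun i =>
        (Bool.xor (Bool.xor (z α && (P β i && P γ i)) (z β && (P α i && P γ i)))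
          (z γ && (P α i && P β i))) && y i) % 2 = 0)
    (P' : Fin n → Fin m → Bool)
    (hP' : ∀ α i, P' α i = Bool.xor (P α i) (z α && y i)) :
    ∀ α β γ : Fin n, α ≤ β → β ≤ γ →
      wt (fun i => P' α i && P' β i && P' γ i) % 2 =
      wt (fun i => P α i && P β i && P γ i) % 2 := by
  -- converted hypotheses
  have H1 : ∑ i, b2 (y i) = 0 := wt_zero_iff _ h1
  have H2 : ∀ α, ∑ i, b2 (P α i && y i) = 0 := fun α => wt_zero_iff _ (h2 α)
  -- T3 sum is zero for all α ≤ β ≤ γ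
  have HT : ∀ α β γ : Fin n, α ≤ β → β ≤ γ →
      ∑ i, b2 ((Bool.xor (Bool.xor (z α && (P β i && P γ i)) (z β && (P α i && P γ i)))
        (z γ && (P α i && P β i))) && y i) = 0 := by
    intro α β γ hab hbc
    rcases eq_or_lt_of_le hab with h | h
    · subst h
      have hpt : ∀ i, b2 ((Bool.xor (Bool.xor (z α && (P α i && P γ i)) (z α && (P α i && P γ i)))
          (z γ && (P α i && P α i))) && y i) = b2 (z γ) * b2 (P α i && y i) := by
        intro i
        rw [← b2_and]
        congr 1
        cases z α <;> cases z γ <;> cases P α i <;> cases P γ i <;> cases y i <;> decide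
      rw [Finset.sum_congr rfl (fun i _ => hpt i), ← Finset.mul_sum, H2 α, mul_zero]
    · rcases eq_or_lt_of_le hbc with h' | h'
      · subst h'
        have hpt : ∀ i, b2 ((Bool.xor (Bool.xor (z α && (P β i && P β i)) (z β && (P α i && P β i)))
            (z β && (P α i && P β i))) && y i) = b2 (z α) * b2 (P β i && y i) := by
          intro i
          rw [← b2_and]
          congr 1
          cases z α <;> cases z β <;> cases P α i <;> cases P β i <;> cases y i <;> decide
        rw [Finset.sum_congr rfl (fun i _ => hpt i), ← Finset.mul_sum, H2 β, mul_zero]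
      · exact wt_zero_iff _ (h3 α β γ h h')
  intro α β γ hab hbc
  have key : ((wt (fun i => P' α i && P' β i && P' γ i) : ℕ) : ZMod 2) =
      ((wt (fun i => P α i && P β i && P γ i) : ℕ) : ZMod 2) := by
    rw [wt_cast, wt_cast]
    have hpt : ∀ i, b2 (P' α i && P' β i && P' γ i) =
        b2 (P α i && P β i && P γ i)
        + b2 ((Bool.xor (Bool.xor (z α && (P β i && P γ i)) (z β && (P α i && P γ i)))
            (z γ && (P α i && P β i))) && y i)
        + b2 (z α) * b2 (z β) * b2 (P γ i && y i)
        + b2 (z α) * b2 (z γ) * b2 (P β i && y i)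
        + b2 (z β) * b2 (z γ) * b2 (P α i && y i)
        + b2 (z α) * b2 (z β) * b2 (z γ) * b2 (y i) := by
      intro i
      rw [hP', hP', hP', bool_key, b2_xor, b2_xor, b2_xor, b2_xor, b2_xor]
      rw [b2_and (z α && z β), b2_and (z α && z γ), b2_and (z β && z γ),
          b2_and (z α && z β && z γ), b2_and (z α && z β), b2_and (z α) (z γ),
          b2_and (z β) (z γ), b2_and (z α) (z β)]
      ring
    rw [Finset.sum_congr rfl (fun i _ => hpt i)]
    simp only [Finset.sum_add_distrib, ← Finset.mul_sum]
    rw [HT α β γ hab hbc, H2 α, H2 β, H2 γ, H1]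
    ring
  have := (ZMod.natCast_eq_natCast_iff _ _ _).mp key
  exact this
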